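/- Let G₄ = g^{⊗6} be a neutral IIA GSWF on n voters and 4 alternatives, and let G₃ = g^{⊗3} be its restriction to any 3 alternatives. Then GCW(G₄) = 2·GCW(G₃) − 1, where GCW(H) denotes the probability over a uniform profile that H has a Generalized Condorcet Winner. -/

import Mathlib

open Finset
open scoped Classical

/-- A linear order on `m` alternatives, represented by its ranking permutation:
`σ a` is the rank of alternative `a` (rank `0` is most preferred). -/
abbrev OrderM (m : ℕ) := Equiv.Perm (Fin m)

/-- A profile of `n` voters on `m` alternatives. -/
abbrev ProfileM (n m : ℕ) := Fin n → OrderM m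

/-- Voter with ranking `σ` prefers alternative `a` over alternative `b`. -/
def PrefersM (m : ℕ) (σ : OrderM m) (a b : Fin m) : Prop := σ a < σ b

/-- The column `x^{a,b} ∈ {0,1}ⁿ` of individual preferences between `a` and `b`. -/
noncomputable def colM (n m : ℕ) (x : ProfileM n m) (a b : Fin m) : Fin n → Bool :=
  fun i => decide (PrefersM m (x i) a b)

/-- `GCW(g^{⊗C(m,2)})`: the probability that a uniform profile on `m` alternatives has a
Generalized Condorcet Winner under the neutral IIA GSWF determined by `g`. -/
noncomputable def GCWprob (n m : ℕ) (g : (Fin n → Bool) → Bool) : ℝ :=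
  ((univ.filter (fun x : ProfileM n m =>
      ∃ a : Fin m, ∀ b : Fin m, b ≠ a → g (colM n m x a b) = true)).card : ℝ) /
  (Fintype.card (ProfileM n m) : ℝ)

section Aux14

variable (n : ℕ) (g : (Fin n → Bool) → Bool)

lemma colM_flip {m : ℕ} (x : ProfileM n m) {a b : Fin m} (hab : a ≠ b) :
    colM n m x b a = fun i => !(colM n m x a b i) := by
  funext i
  have hne : (x i) a ≠ (x i) b := fun h => hab ((x i).injective h)
  rcases hne.lt_or_gt with h | h
  · simp [colM, PrefersM, h, h.not_gt]
  · simp [colM, PrefersM, h, h.not_gt]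

lemma g_colM_flip (hodd : ∀ z : Fin n → Bool, g (fun i => !z i) = !g z)
    {m : ℕ} (x : ProfileM n m) {a b : Fin m} (hab : a ≠ b) :
    g (colM n m x b a) = !g (colM n m x a b) := by
  rw [colM_flip n x hab]; exact hodd _

/-- The GCW event splits as a disjoint union over the winning alternative. -/
lemma gcw_card (hodd : ∀ z : Fin n → Bool, g (fun i => !z i) = !g z) (m : ℕ) :
    (univ.filter (fun x : ProfileM n m =>
        ∃ a : Fin m, ∀ b : Fin m, b ≠ a → g (colM n m x a b) = true)).card
      = ∑ a : Fin m, (univ.filter (fun x : ProfileM n m =>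
          ∀ b : Fin m, b ≠ a → g (colM n m x a b) = true)).card := by
  have hset : (univ.filter (fun x : ProfileM n m =>
        ∃ a : Fin m, ∀ b : Fin m, b ≠ a → g (colM n m x a b) = true))
      = univ.biUnion (fun a : Fin m =>
          univ.filter (fun x : ProfileM n m =>
            ∀ b : Fin m, b ≠ a → g (colM n m x a b) = true)) := by
    ext x; simp
  rw [hset]
  apply Finset.card_biUnion
  intro a _ c _ hac
  rw [Function.onFun, Finset.disjoint_left]
  intro x hx hx'
  simp only [mem_filter, mem_univ, true_and] at hx hx'
  have h1 := hx c (fun h => hac h.symm)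
  have h2 := hx' a hac
  rw [g_colM_flip n g hodd x hac, h1] at h2
  simp at h2

lemma winner_mul_swap {m : ℕ} (x : ProfileM n m) (a c : Fin m)
    (hx : ∀ b : Fin m, b ≠ a → g (colM n m x a b) = true) :
    ∀ b : Fin m, b ≠ c → g (colM n m (fun i => x i * Equiv.swap c a) c b) = true := by
  intro b hb
  have hcol : colM n m (fun i => x i * Equiv.swap c a) c b
      = colM n m x a (Equiv.swap c a b) := by
    funext i
    simp [colM, PrefersM, Equiv.Perm.mul_apply, Equiv.swap_apply_left]
    congr
  rw [hcol]
  apply hx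
  intro h
  apply hb
  have h2 : Equiv.swap c a b = Equiv.swap c a c := by rw [h, Equiv.swap_apply_left]
  exact (Equiv.swap c a).injective h2

lemma card_winner_eq {m : ℕ} (a c : Fin m) :
    (univ.filter (fun x : ProfileM n m =>
        ∀ b : Fin m, b ≠ a → g (colM n m x a b) = true)).card
      = (univ.filter (fun x : ProfileM n m =>
        ∀ b : Fin m, b ≠ c → g (colM n m x c b) = true)).card := by
  apply Finset.card_bij (fun x _ => (fun i => x i * Equiv.swap c a : ProfileM n m))
  · intro x hx
    simp only [mem_filter, mem_univ, true_and] at hx ⊢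
    exact winner_mul_swap n g x a c hx
  · intro x _ x' _ h
    funext i
    exact mul_right_cancel (congrFun h i)
  · intro y hy
    simp only [mem_filter, mem_univ, true_and] at hy
    have h1 := winner_mul_swap n g y c a hy
    rw [Equiv.swap_comm a c] at h1
    refine ⟨fun i => y i * Equiv.swap c a, ?_, ?_⟩
    · simp only [mem_filter, mem_univ, true_and]
      exact h1
    · funext i
      rw [mul_assoc, Equiv.swap_mul_self, mul_one]

/-- The pattern of outcomes of alternative `0` against `1`, `2`, `3`. -/
noncomputable def pat4 (x : ProfileM n 4) : Bool × Bool × Bool :=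
  (g (colM n 4 x 0 1), g (colM n 4 x 0 2), g (colM n 4 x 0 3))

noncomputable def aCnt (p : Bool × Bool × Bool) : ℕ :=
  (univ.filter (fun x : ProfileM n 4 => pat4 n g x = p)).card

lemma aCnt_transfer (Φ : ProfileM n 4 → ProfileM n 4) (hΦ : ∀ x, Φ (Φ x) = x)
    (p q : Bool × Bool × Bool) (h : ∀ x, pat4 n g (Φ x) = q ↔ pat4 n g x = p) :
    aCnt n g p = aCnt n g q := by
  unfold aCnt
  apply Finset.card_bij (fun x _ => Φ x)
  · intro x hx
    simp only [mem_filter, mem_univ, true_and] at hx ⊢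
    exact (h x).mpr hx
  · intro x _ x' _ hxx'
    have h2 := congrArg Φ hxx'
    rwa [hΦ, hΦ] at h2
  · intro y hy
    simp only [mem_filter, mem_univ, true_and] at hy
    refine ⟨Φ y, ?_, hΦ y⟩
    simp only [mem_filter, mem_univ, true_and]
    have h2 := h (Φ y)
    rw [hΦ] at h2
    exact h2.mp hy

lemma pat4_neg (hodd : ∀ z : Fin n → Bool, g (fun i => !z i) = !g z) (x : ProfileM n 4) :
    pat4 n g (fun i => Fin.revPerm * x i)
      = (!(pat4 n g x).1, !(pat4 n g x).2.1, !(pat4 n g x).2.2) := by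
  have key : ∀ b : Fin 4, b ≠ 0 →
      g (colM n 4 (fun i => Fin.revPerm * x i) 0 b) = !g (colM n 4 x 0 b) := by
    intro b hb
    have h1 : colM n 4 (fun i => Fin.revPerm * x i) 0 b = colM n 4 x b 0 := by
      funext i
      simp [colM, PrefersM, Equiv.Perm.mul_apply, Fin.rev_lt_rev]
      congr
    rw [h1, g_colM_flip n g hodd x hb.symm]
  simp [pat4, key 1 (by decide), key 2 (by decide), key 3 (by decide)]

lemma colM_mul_swap (u v : Fin 4) (hu : u ≠ 0) (hv : v ≠ 0) (x : ProfileM n 4) (b : Fin 4) :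
    colM n 4 (fun i => x i * Equiv.swap u v) 0 b = colM n 4 x 0 (Equiv.swap u v b) := by
  funext i
  simp [colM, PrefersM, Equiv.Perm.mul_apply,
    Equiv.swap_apply_of_ne_of_ne (Ne.symm hu) (Ne.symm hv)]
  congr

lemma neg_invol (x : ProfileM n 4) :
    (fun i => Fin.revPerm * ((fun i => Fin.revPerm * x i) i)) = x := by
  funext i
  rw [← mul_assoc]
  have h : (Fin.revPerm : Equiv.Perm (Fin 4)) * Fin.revPerm = 1 := by
    ext c
    simp [Equiv.Perm.mul_apply]
  rw [h, one_mul]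

lemma swap_invol (u v : Fin 4) (x : ProfileM n 4) :
    (fun i => ((fun i => x i * Equiv.swap u v) i) * Equiv.swap u v) = x := by
  funext i
  rw [mul_assoc, Equiv.swap_mul_self, mul_one]

lemma pat4_s13 (x : ProfileM n 4) :
    pat4 n g (fun i => x i * Equiv.swap (1 : Fin 4) 3)
      = ((pat4 n g x).2.2, (pat4 n g x).2.1, (pat4 n g x).1) := by
  simp [pat4, colM_mul_swap n 1 3 (by decide) (by decide),
    show Equiv.swap (1 : Fin 4) 3 1 = 3 from by decide,
    show Equiv.swap (1 : Fin 4) 3 2 = 2 from by decide,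
    show Equiv.swap (1 : Fin 4) 3 3 = 1 from by decide]

lemma pat4_s23 (x : ProfileM n 4) :
    pat4 n g (fun i => x i * Equiv.swap (2 : Fin 4) 3)
      = ((pat4 n g x).1, (pat4 n g x).2.2, (pat4 n g x).2.1) := by
  simp [pat4, colM_mul_swap n 2 3 (by decide) (by decide),
    show Equiv.swap (2 : Fin 4) 3 1 = 1 from by decide,
    show Equiv.swap (2 : Fin 4) 3 2 = 3 from by decide,
    show Equiv.swap (2 : Fin 4) 3 3 = 2 from by decide]

lemma bnot_iff (a b : Bool) : ((!a) = (!b)) ↔ a = b := by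
  cases a <;> cases b <;> decide

lemma aCnt_neg (hodd : ∀ z : Fin n → Bool, g (fun i => !z i) = !g z)
    (p : Bool × Bool × Bool) : aCnt n g p = aCnt n g (!p.1, !p.2.1, !p.2.2) := by
  apply aCnt_transfer n g (fun x => fun i => Fin.revPerm * x i) (neg_invol n)
  intro x
  rw [pat4_neg n g hodd x]
  rcases p with ⟨p1, p2, p3⟩
  simp [Prod.ext_iff, bnot_iff]

lemma aCnt_s13 (p : Bool × Bool × Bool) : aCnt n g p = aCnt n g (p.2.2, p.2.1, p.1) := by
  apply aCnt_transfer n g (fun x => fun i => x i * Equiv.swap (1 : Fin 4) 3)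
    (swap_invol n 1 3)
  intro x
  rw [pat4_s13 n g x]
  rcases p with ⟨p1, p2, p3⟩
  simp [Prod.ext_iff]
  tauto

lemma aCnt_s23 (p : Bool × Bool × Bool) : aCnt n g p = aCnt n g (p.1, p.2.2, p.2.1) := by
  apply aCnt_transfer n g (fun x => fun i => x i * Equiv.swap (2 : Fin 4) 3)
    (swap_invol n 2 3)
  intro x
  rw [pat4_s23 n g x]
  rcases p with ⟨p1, p2, p3⟩
  simp [Prod.ext_iff]
  tauto

lemma card_profile4 : Fintype.card (ProfileM n 4) = 24 ^ n := by
  have h : Fintype.card (ProfileM n 4) = Fintype.card (OrderM 4) ^ n := by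
    simp [Fintype.card_fun]
  rw [h]
  norm_num [Fintype.card_perm, Nat.factorial]

lemma card_profile3 : Fintype.card (ProfileM n 3) = 6 ^ n := by
  have h : Fintype.card (ProfileM n 3) = Fintype.card (OrderM 3) ^ n := by
    simp [Fintype.card_fun]
  rw [h]
  norm_num [Fintype.card_perm, Nat.factorial]

lemma part4 : (24 ^ n : ℕ) = ∑ p : Bool × Bool × Bool, aCnt n g p := by
  have h := Finset.card_eq_sum_card_fiberwise
    (f := pat4 n g) (s := (univ : Finset (ProfileM n 4))) (t := univ)
    (fun x _ => mem_univ _)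
  rw [Finset.card_univ, card_profile4 n] at h
  rw [h]
  rfl

lemma count4 (hodd : ∀ z : Fin n → Bool, g (fun i => !z i) = !g z) :
    (univ.filter (fun x : ProfileM n 4 =>
        ∃ a : Fin 4, ∀ b : Fin 4, b ≠ a → g (colM n 4 x a b) = true)).card
      = 4 * aCnt n g (true, true, true) := by
  rw [gcw_card n g hodd 4]
  have he : ∀ a : Fin 4,
      (univ.filter (fun x : ProfileM n 4 =>
        ∀ b : Fin 4, b ≠ a → g (colM n 4 x a b) = true)).card
      = aCnt n g (true, true, true) := by
    intro a
    rw [card_winner_eq n g a 0]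
    have hs : (univ.filter (fun x : ProfileM n 4 =>
        ∀ b : Fin 4, b ≠ (0 : Fin 4) → g (colM n 4 x 0 b) = true))
        = univ.filter (fun x : ProfileM n 4 => pat4 n g x = (true, true, true)) := by
      ext x
      simp only [mem_filter, mem_univ, true_and, pat4, Prod.mk.injEq]
      constructor
      · intro h
        exact ⟨h 1 (by decide), h 2 (by decide), h 3 (by decide)⟩
      · rintro ⟨h1, h2, h3⟩ b hb
        fin_cases b
        · exact absurd (by decide) hb
        · exact h1
        · exact h2
        · exact h3
    rw [hs]
    rfl
  simp only [he]
  simp [Finset.card_univ]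

noncomputable def cCnt : ℕ :=
  (univ.filter (fun y : ProfileM n 3 =>
    g (colM n 3 y 0 1) = true ∧ g (colM n 3 y 0 2) = true)).card

lemma count3 (hodd : ∀ z : Fin n → Bool, g (fun i => !z i) = !g z) :
    (univ.filter (fun y : ProfileM n 3 =>
        ∃ a : Fin 3, ∀ b : Fin 3, b ≠ a → g (colM n 3 y a b) = true)).card
      = 3 * cCnt n g := by
  rw [gcw_card n g hodd 3]
  have he : ∀ a : Fin 3,
      (univ.filter (fun y : ProfileM n 3 =>
        ∀ b : Fin 3, b ≠ a → g (colM n 3 y a b) = true)).card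
      = cCnt n g := by
    intro a
    rw [card_winner_eq n g a 0]
    have hs : (univ.filter (fun y : ProfileM n 3 =>
        ∀ b : Fin 3, b ≠ (0 : Fin 3) → g (colM n 3 y 0 b) = true))
        = univ.filter (fun y : ProfileM n 3 =>
            g (colM n 3 y 0 1) = true ∧ g (colM n 3 y 0 2) = true) := by
      ext y
      simp only [mem_filter, mem_univ, true_and]
      constructor
      · intro h
        exact ⟨h 1 (by decide), h 2 (by decide)⟩
      · rintro ⟨h1, h2⟩ b hb
        fin_cases b
        · exact absurd (by decide) hb
        · exact h1
        · exact h2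
    rw [hs]
    rfl
  simp only [he]
  simp [Finset.card_univ]

lemma bsplit :
    aCnt n g (true, true, true) + aCnt n g (true, true, false)
      = (univ.filter (fun x : ProfileM n 4 =>
          g (colM n 4 x 0 1) = true ∧ g (colM n 4 x 0 2) = true)).card := by
  unfold aCnt
  have hu : (univ.filter (fun x : ProfileM n 4 =>
        g (colM n 4 x 0 1) = true ∧ g (colM n 4 x 0 2) = true))
      = (univ.filter (fun x : ProfileM n 4 => pat4 n g x = (true, true, true)))
        ∪ (univ.filter (fun x : ProfileM n 4 => pat4 n g x = (true, true, false))) := by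
    ext x
    simp only [mem_filter, mem_union, mem_univ, true_and, pat4, Prod.mk.injEq]
    cases h3 : g (colM n 4 x 0 3) <;> simp [h3]
  rw [hu, Finset.card_union_of_disjoint]
  rw [Finset.disjoint_left]
  intro x h1 h2
  simp only [mem_filter, mem_univ, true_and] at h1 h2
  rw [h1] at h2
  simp at h2

/-- Insert alternative `3` at rank `k` in the order `τ` on three alternatives. -/
def insPerm (k : Fin 4) (τ : Equiv.Perm (Fin 3)) : Equiv.Perm (Fin 4) :=
  (finSuccEquivLast.trans (Equiv.optionCongr τ)).trans (finSuccEquiv' k).symm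

lemma insPerm_castSucc (k : Fin 4) (τ : Equiv.Perm (Fin 3)) (a : Fin 3) :
    insPerm k τ a.castSucc = k.succAbove (τ a) := by
  simp [insPerm]

lemma insPerm_last (k : Fin 4) (τ : Equiv.Perm (Fin 3)) :
    insPerm k τ (Fin.last 3) = k := by
  simp only [insPerm, Equiv.trans_apply, finSuccEquivLast_last, Equiv.optionCongr_apply,
    Option.map_none, finSuccEquiv'_symm_none]

lemma insPerm_bijective :
    Function.Bijective (fun p : Fin 4 × Equiv.Perm (Fin 3) => insPerm p.1 p.2) := by
  rw [Fintype.bijective_iff_injective_and_card]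
  constructor
  · rintro ⟨k, τ⟩ ⟨k', τ'⟩ h
    simp only at h
    have hk : k = k' := by
      have h2 := DFunLike.congr_fun h (Fin.last 3)
      rwa [insPerm_last, insPerm_last] at h2
    subst hk
    have hτ : τ = τ' := by
      apply Equiv.ext
      intro a
      have h2 := DFunLike.congr_fun h a.castSucc
      rw [insPerm_castSucc, insPerm_castSucc] at h2
      exact Fin.succAbove_right_injective h2
    rw [hτ]
  · simp [Fintype.card_perm]
    norm_num [Nat.factorial]

lemma profile_bij :
    Function.Bijective (fun p : (Fin n → Fin 4) × ProfileM n 3 =>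
      (fun i => insPerm (p.1 i) (p.2 i) : ProfileM n 4)) := by
  rw [Fintype.bijective_iff_injective_and_card]
  constructor
  · rintro ⟨k, y⟩ ⟨k', y'⟩ h
    simp only at h
    have hp : ∀ i, ((k i, y i) : Fin 4 × Equiv.Perm (Fin 3)) = (k' i, y' i) :=
      fun i => insPerm_bijective.1 (congrFun h i)
    have h1 : k = k' := funext fun i => congrArg Prod.fst (hp i)
    have h2 : y = y' := funext fun i => congrArg Prod.snd (hp i)
    rw [h1, h2]
  · rw [Fintype.card_prod]
    rw [card_profile3 n, card_profile4 n]
    simp [Fintype.card_fun]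
    rw [← mul_pow]
    norm_num

lemma col_insPerm (k : Fin n → Fin 4) (y : ProfileM n 3) (a b : Fin 3) :
    colM n 4 (fun i => insPerm (k i) (y i)) a.castSucc b.castSucc = colM n 3 y a b := by
  funext i
  simp [colM, PrefersM, insPerm_castSucc, Fin.succAbove_lt_succAbove_iff]
  congr

lemma bcount :
    (univ.filter (fun x : ProfileM n 4 =>
        g (colM n 4 x 0 1) = true ∧ g (colM n 4 x 0 2) = true)).card
      = 4 ^ n * cCnt n g := by
  have hcard : ((univ : Finset (Fin n → Fin 4)) ×ˢ
      (univ.filter (fun y : ProfileM n 3 =>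
        g (colM n 3 y 0 1) = true ∧ g (colM n 3 y 0 2) = true))).card
      = 4 ^ n * cCnt n g := by
    rw [Finset.card_product, Finset.card_univ]
    rw [cCnt]
    congr 1
    simp [Fintype.card_fun]
  rw [← hcard]
  symm
  apply Finset.card_bij (fun p _ => (fun i => insPerm (p.1 i) (p.2 i) : ProfileM n 4))
  · rintro ⟨k, y⟩ hp
    simp only [Finset.mem_product, mem_filter, mem_univ, true_and] at hp ⊢
    have h1 := col_insPerm n k y 0 1
    have h2 := col_insPerm n k y 0 2
    rw [show ((0 : Fin 3).castSucc = (0 : Fin 4)) from by decide,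
      show ((1 : Fin 3).castSucc = (1 : Fin 4)) from by decide] at h1
    rw [show ((0 : Fin 3).castSucc = (0 : Fin 4)) from by decide,
      show ((2 : Fin 3).castSucc = (2 : Fin 4)) from by decide] at h2
    exact ⟨by rw [h1]; exact hp.1, by rw [h2]; exact hp.2⟩
  · rintro ⟨k, y⟩ _ ⟨k', y'⟩ _ h
    exact (profile_bij n).1 h
  · intro x hx
    obtain ⟨p, rfl⟩ := (profile_bij n).2 x
    refine ⟨p, ?_, rfl⟩
    simp only [Finset.mem_product, mem_filter, mem_univ, true_and] at hx ⊢
    have h1 := col_insPerm n p.1 p.2 0 1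
    have h2 := col_insPerm n p.1 p.2 0 2
    rw [show ((0 : Fin 3).castSucc = (0 : Fin 4)) from by decide,
      show ((1 : Fin 3).castSucc = (1 : Fin 4)) from by decide] at h1
    rw [show ((0 : Fin 3).castSucc = (0 : Fin 4)) from by decide,
      show ((2 : Fin 3).castSucc = (2 : Fin 4)) from by decide] at h2
    exact ⟨by rw [← h1]; exact hx.1, by rw [← h2]; exact hx.2⟩

end Aux14

/-- For a neutral IIA GSWF `G₄ = g^{⊗6}` on four alternatives (so `g` is odd) with
restriction `G₃ = g^{⊗3}` to three alternatives, `GCW(G₄) = 2·GCW(G₃) − 1`. -/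
theorem stmt14 (n : ℕ) (g : (Fin n → Bool) → Bool)
    (hodd : ∀ z : Fin n → Bool, g (fun i => !z i) = !g z) :
    GCWprob n 4 g = 2 * GCWprob n 3 g - 1 := by
  -- counting facts
  have h4 := count4 n g hodd
  have h3 := count3 n g hodd
  have hpart := part4 n g
  simp only [Fintype.sum_prod_type, Fintype.sum_bool] at hpart
  have e1 := aCnt_neg n g hodd (true, true, true)
  have e2 := aCnt_neg n g hodd (true, true, false)
  have e3 := aCnt_s23 n g (true, false, true)
  have e4 := aCnt_s13 n g (false, true, true)
  have e5 := aCnt_neg n g hodd (true, false, true)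
  have e6 := aCnt_neg n g hodd (false, true, true)
  simp only [Bool.not_true, Bool.not_false] at e1 e2 e5 e6
  simp only at e3 e4
  have hkey : (24 : ℕ) ^ n
      = 2 * aCnt n g (true, true, true) + 6 * aCnt n g (true, true, false) := by
    omega
  have hB : aCnt n g (true, true, true) + aCnt n g (true, true, false)
      = 4 ^ n * cCnt n g := by
    rw [bsplit n g, bcount n g]
  -- probabilities
  have hprob4 : GCWprob n 4 g
      = (4 * (aCnt n g (true, true, true) : ℝ)) / ((24 : ℝ) ^ n) := by
    unfold GCWprob
    rw [h4, card_profile4 n]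
    push_cast
    ring
  have hprob3 : GCWprob n 3 g = (3 * (cCnt n g : ℝ)) / ((6 : ℝ) ^ n) := by
    unfold GCWprob
    rw [h3, card_profile3 n]
    push_cast
    ring
  rw [hprob4, hprob3]
  have c1 : (24 : ℝ) ^ n = 2 * (aCnt n g (true, true, true) : ℝ)
      + 6 * (aCnt n g (true, true, false) : ℝ) := by exact_mod_cast hkey
  have c2 : (aCnt n g (true, true, true) : ℝ) + (aCnt n g (true, true, false) : ℝ)
      = (4 : ℝ) ^ n * (cCnt n g : ℝ) := by exact_mod_cast hB
  have c3 : (24 : ℝ) ^ n = (4 : ℝ) ^ n * (6 : ℝ) ^ n := by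
    rw [← mul_pow]; norm_num
  have hA : 4 * (aCnt n g (true, true, true) : ℝ)
      = 6 * ((4 : ℝ) ^ n * (cCnt n g : ℝ)) - (24 : ℝ) ^ n := by linarith
  have h6 : (0 : ℝ) < (6 : ℝ) ^ n := by positivity
  have h24 : (0 : ℝ) < (24 : ℝ) ^ n := by positivity
  rw [hA, c3]
  field_simp
  ring
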